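/- arXiv:2106.12022 — 6 statements merged into one kernel-verified Lean document; each statement's English description precedes it below -/
import Mathlib

section
/- Let a, b > 0 be real numbers and let p, q be real numbers with 0 ≤ p < q. Then the function f : [0,∞) → ℝ defined by f(A) = A·(q·A + p·a) / ((A + a)·(A + b)) is strictly increasing on [0,∞). -/
/-- The rational function `A ↦ A(qA + pa)/((A+a)(A+b))` appearing in the
MFL steady-state equation is strictly increasing on `[0, ∞)` when
`a, b > 0` and `0 ≤ p < q`. -/
theorem mfl_rhs_strictMonoOn (a b p q : ℝ)
    (ha : 0 < a) (hb : 0 < b) (hp : 0 ≤ p) (hpq : p < q) :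
    StrictMonoOn (fun A : ℝ => A * (q * A + p * a) / ((A + a) * (A + b)))
      (Set.Ici 0) := by
  intro x hx y hy hxy
  simp only [Set.mem_Ici] at hx hy
  have hdx : 0 < (x + a) * (x + b) := by positivity
  have hdy : 0 < (y + a) * (y + b) := by positivity
  rw [div_lt_div_iff₀ hdx hdy]
  have hy' : 0 < y := lt_of_le_of_lt hx hxy
  have h1 : 0 ≤ p * ((x + a) * (y + a) * (b * (y - x))) := by
    have : 0 ≤ y - x := by linarith
    positivity
  have h2 : 0 < (q - p) * ((y - x) * ((a + b) * (x * y) + a * b * (y + x))) := by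
    have h3 : 0 < y - x := by linarith
    have h4 : 0 < (a + b) * (x * y) + a * b * (y + x) := by positivity
    have h5 : 0 < q - p := by linarith
    positivity
  nlinarith [h1, h2]
end

section
/- Let θ₁ > 0, κ ≥ 0, and let ρ₀, ρ₂, ρ₁ be real numbers with ρ₀ < 1, ρ₂ < 1, and ρ₁ > max(ρ₀, ρ₂). Define t₂^{MFL} = 2 + (ρ₁ − ρ₀)/(θ₁·(1 − ρ₀)) and t₂^{IT-MFL} = 2 + (ρ₁ − ρ₀ + κ·(ρ₁ − ρ₂))/(θ₁·(1 − ρ₀ + κ·(1 − ρ₂))·(1 + κ)). Then t₂^{IT-MFL} ≤ t₂^{MFL} + C, where C = ((ρ₁ − ρ₂)/θ₁)·min(κ/(1 − ρ₀), 1/(1 − ρ₂)). -/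
/-- Remark 2: the IT-MFL period estimate is controlled by the MFL period
estimate up to the explicit constant `C`. -/
theorem t2_controlled (θ₁ κ ρ₀ ρ₂ ρ₁ : ℝ)
    (hθ₁ : 0 < θ₁) (hκ : 0 ≤ κ) (hρ₀ : ρ₀ < 1) (hρ₂ : ρ₂ < 1)
    (hρ₁ : ρ₁ > max ρ₀ ρ₂) :
    let t₂MFL := 2 + (ρ₁ - ρ₀) / (θ₁ * (1 - ρ₀))
    let t₂IT := 2 + (ρ₁ - ρ₀ + κ * (ρ₁ - ρ₂)) /
      (θ₁ * (1 - ρ₀ + κ * (1 - ρ₂)) * (1 + κ))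
    let C := (ρ₁ - ρ₂) / θ₁ * min (κ / (1 - ρ₀)) (1 / (1 - ρ₂))
    t₂IT ≤ t₂MFL + C := by
  intro t₂MFL t₂IT C
  have ha : 0 < ρ₁ - ρ₀ := by have := lt_of_le_of_lt (le_max_left ρ₀ ρ₂) hρ₁; linarith
  have hb : 0 < ρ₁ - ρ₂ := by have := lt_of_le_of_lt (le_max_right ρ₀ ρ₂) hρ₁; linarith
  have hp : 0 < 1 - ρ₀ := by linarith
  have hq : 0 < 1 - ρ₂ := by linarith
  have hpq : 0 < 1 - ρ₀ + κ * (1 - ρ₂) := by nlinarith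
  have h1κ : 0 < 1 + κ := by linarith
  simp only [t₂MFL, t₂IT, C]
  rcases min_cases (κ / (1 - ρ₀)) (1 / (1 - ρ₂)) with ⟨hm, _⟩ | ⟨hm, _⟩ <;> rw [hm]
  · have h1 : (ρ₁ - ρ₀ + κ * (ρ₁ - ρ₂)) /
        (θ₁ * (1 - ρ₀ + κ * (1 - ρ₂)) * (1 + κ)) ≤
        (ρ₁ - ρ₀ + κ * (ρ₁ - ρ₂)) / (θ₁ * (1 - ρ₀)) := by
      apply div_le_div_of_nonneg_left (by nlinarith) (by positivity)
      nlinarith [mul_nonneg (mul_nonneg hθ₁.le hκ) hq.le,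
        mul_nonneg (mul_nonneg hθ₁.le hκ) hp.le,
        mul_nonneg (mul_nonneg hθ₁.le (mul_nonneg hκ hκ)) hq.le]
    have h2 : (ρ₁ - ρ₀ + κ * (ρ₁ - ρ₂)) / (θ₁ * (1 - ρ₀)) =
        (ρ₁ - ρ₀) / (θ₁ * (1 - ρ₀)) + (ρ₁ - ρ₂) / θ₁ * (κ / (1 - ρ₀)) := by
      field_simp
    linarith
  · have poly : (ρ₁ - ρ₀ + κ * (ρ₁ - ρ₂)) * ((1 - ρ₀) * (1 - ρ₂)) ≤
        ((ρ₁ - ρ₀) * (1 - ρ₂) + (ρ₁ - ρ₂) * (1 - ρ₀)) *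
          ((1 - ρ₀ + κ * (1 - ρ₂)) * (1 + κ)) := by
      nlinarith [mul_nonneg hκ (mul_pos ha (mul_pos hq hq)).le,
        mul_nonneg hκ (mul_pos ha (mul_pos hp hq)).le,
        mul_nonneg (mul_nonneg hκ hκ) (mul_pos ha (mul_pos hq hq)).le,
        mul_pos hb (mul_pos hp hp),
        mul_nonneg hκ (mul_pos hb (mul_pos hp hp)).le,
        mul_nonneg (mul_nonneg hκ hκ) (mul_pos hb (mul_pos hp hq)).le]
    have key : (ρ₁ - ρ₀ + κ * (ρ₁ - ρ₂)) /
        (θ₁ * (1 - ρ₀ + κ * (1 - ρ₂)) * (1 + κ)) ≤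
        (ρ₁ - ρ₀) / (θ₁ * (1 - ρ₀)) + (ρ₁ - ρ₂) / θ₁ * (1 / (1 - ρ₂)) := by
      rw [div_mul_div_comm, div_add_div _ _ (by positivity) (by positivity),
        div_le_div_iff₀ (by positivity) (by positivity)]
      nlinarith [mul_le_mul_of_nonneg_left poly (mul_pos hθ₁ hθ₁).le]
    linarith
end

section
/- Let K₁ > 0, K₂ ≥ 0, K_d > 0, A_tot > 0, g_tot > 0, and B_tot ≥ 0. Define the cubic polynomial Φ(x) = a·x³ + b·x² + c·x + d with coefficients a = K₁, b = 1 + K₂ + (g_tot + B_tot − A_tot + K_d)·K₁, c = (1 + K₂)·(B_tot − A_tot + K_d) + (g_tot − A_tot)·K_d·K₁, d = −(1 + K₂)·A_tot·K_d. Then Φ has exactly one root in (0,∞). -/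
/-- The cubic `Φ` determining the quasi-steady-state free-activator
concentration has exactly one root in `(0, ∞)`. -/
theorem qss_cubic_unique_pos_root (K₁ K₂ Kd Atot gtot Btot : ℝ)
    (hK₁ : 0 < K₁) (hK₂ : 0 ≤ K₂) (hKd : 0 < Kd)
    (hAtot : 0 < Atot) (hgtot : 0 < gtot) (hBtot : 0 ≤ Btot) :
    ∃! x : ℝ, x ∈ Set.Ioi (0 : ℝ) ∧
      K₁ * x ^ 3
        + (1 + K₂ + (gtot + Btot - Atot + Kd) * K₁) * x ^ 2
        + ((1 + K₂) * (Btot - Atot + Kd) + (gtot - Atot) * Kd * K₁) * x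
        + (-((1 + K₂) * Atot * Kd)) = 0 := by
  set f : ℝ → ℝ := fun x =>
      K₁ * x ^ 3
        + (1 + K₂ + (gtot + Btot - Atot + Kd) * K₁) * x ^ 2
        + ((1 + K₂) * (Btot - Atot + Kd) + (gtot - Atot) * Kd * K₁) * x
        + (-((1 + K₂) * Atot * Kd)) with hf
  set g : ℝ → ℝ := fun x =>
      x + Btot * x / (Kd + x) + gtot * (K₁ * x) / (1 + K₂ + K₁ * x) with hg
  -- factorization identity
  have hfac : ∀ x : ℝ, 0 < x →
      f x = ((Kd + x) * (1 + K₂ + K₁ * x)) * (g x - Atot) := by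
    intro x hx
    have h1 : Kd + x ≠ 0 := by positivity
    have h2 : 1 + K₂ + K₁ * x ≠ 0 := by positivity
    simp only [hf, hg]
    field_simp
    ring
  -- g is strictly monotone on (0, ∞)
  have hmono : ∀ x y : ℝ, 0 < x → 0 < y → x < y → g x < g y := by
    intro x y hx hy hxy
    have hdenx : (0:ℝ) < Kd + x := by positivity
    have hdeny : (0:ℝ) < Kd + y := by positivity
    have hdx : (0:ℝ) < 1 + K₂ + K₁ * x := by positivity
    have hdy : (0:ℝ) < 1 + K₂ + K₁ * y := by positivity
    have h1 : Btot * x / (Kd + x) ≤ Btot * y / (Kd + y) := by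
      rw [div_le_div_iff₀ hdenx hdeny]
      nlinarith [mul_nonneg (mul_nonneg hBtot hKd.le) (sub_nonneg.mpr hxy.le)]
    have h2 : gtot * (K₁ * x) / (1 + K₂ + K₁ * x) ≤ gtot * (K₁ * y) / (1 + K₂ + K₁ * y) := by
      rw [div_le_div_iff₀ hdx hdy]
      nlinarith [mul_nonneg (mul_nonneg (mul_pos hgtot hK₁).le (sub_nonneg.mpr hxy.le)) hK₂,
        mul_pos (mul_pos hgtot hK₁) (sub_pos.mpr hxy)]
    simp only [hg]
    linarith
  -- existence via IVT on [0, Atot]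
  have hcont : ContinuousOn f (Set.Icc 0 Atot) := by
    apply Continuous.continuousOn
    simp only [hf]
    continuity
  have hf0 : f 0 < 0 := by
    simp only [hf]
    have h : 0 < (1 + K₂) * Atot * Kd := by positivity
    nlinarith
  have hfA : 0 < f Atot := by
    rw [hfac Atot hAtot]
    have hdenA : (0:ℝ) < Kd + Atot := by positivity
    have hdA : (0:ℝ) < 1 + K₂ + K₁ * Atot := by positivity
    have hgA : Atot < g Atot := by
      simp only [hg]
      have h1 : 0 ≤ Btot * Atot / (Kd + Atot) := by positivity
      have h2 : 0 < gtot * (K₁ * Atot) / (1 + K₂ + K₁ * Atot) := by positivity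
      linarith
    have : 0 < g Atot - Atot := by linarith
    positivity
  have hsub : Set.Ioo (f 0) (f Atot) ⊆ f '' Set.Ioo 0 Atot :=
    intermediate_value_Ioo hAtot.le hcont
  obtain ⟨x₀, hx₀mem, hx₀⟩ := hsub ⟨hf0, hfA⟩
  refine ⟨x₀, ⟨hx₀mem.1, hx₀⟩, ?_⟩
  -- uniqueness
  rintro y ⟨hy, hfy⟩
  have key : ∀ z : ℝ, 0 < z → f z = 0 → g z = Atot := by
    intro z hz hfz
    have h := hfac z hz
    rw [hfz] at h
    have hpos : (0:ℝ) < (Kd + z) * (1 + K₂ + K₁ * z) := by positivity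
    have := (mul_eq_zero.mp h.symm).resolve_left (ne_of_gt hpos)
    linarith [sub_eq_zero.mp this]
  have hgx : g x₀ = Atot := key x₀ hx₀mem.1 hx₀
  have hgy : g y = Atot := key y hy hfy
  rcases lt_trichotomy y x₀ with h | h | h
  · exact absurd (hgy.trans hgx.symm) (ne_of_lt (hmono y x₀ hy hx₀mem.1 h))
  · exact h
  · exact absurd (hgx.trans hgy.symm) (ne_of_lt (hmono x₀ y hx₀mem.1 hy h))
end

section
/- Let K₁ > 0, K₂ ≥ 0, K_d > 0, A_tot > 0, g_tot > 0, and for B ≥ 0 let Φ_B(x) be the cubic with coefficients a = K₁, b = 1 + K₂ + (g_tot + B − A_tot + K_d)·K₁, c = (1 + K₂)·(B − A_tot + K_d) + (g_tot − A_tot)·K_d·K₁, d = −(1 + K₂)·A_tot·K_d, and let A_qss(B) denote the unique positive root of Φ_B. Then A_qss is strictly decreasing: for all 0 ≤ B₁ < B₂, A_qss(B₂) < A_qss(B₁). -/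
/-- The quasi-steady-state free-activator concentration `A_qss(B)`, the
unique positive root of the cubic `Φ_B`, is strictly decreasing in the
total target protein concentration `B`. -/
theorem Aqss_strictly_decreasing (K₁ K₂ Kd Atot gtot : ℝ)
    (hK₁ : 0 < K₁) (hK₂ : 0 ≤ K₂) (hKd : 0 < Kd)
    (hAtot : 0 < Atot) (hgtot : 0 < gtot)
    (Aqss : ℝ → ℝ)
    (hpos : ∀ B : ℝ, 0 ≤ B → 0 < Aqss B)
    (hroot : ∀ B : ℝ, 0 ≤ B →
      K₁ * (Aqss B) ^ 3
        + (1 + K₂ + (gtot + B - Atot + Kd) * K₁) * (Aqss B) ^ 2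
        + ((1 + K₂) * (B - Atot + Kd) + (gtot - Atot) * Kd * K₁) * (Aqss B)
        + (-((1 + K₂) * Atot * Kd)) = 0) :
    ∀ B₁ B₂ : ℝ, 0 ≤ B₁ → B₁ < B₂ → Aqss B₂ < Aqss B₁ := by
  intro B₁ B₂ hB₁ hlt
  by_contra hcon
  push_neg at hcon
  have hB₂ : (0:ℝ) ≤ B₂ := le_trans hB₁ hlt.le
  set x₁ := Aqss B₁ with hx₁def
  set x₂ := Aqss B₂ with hx₂def
  have hx₁ : 0 < x₁ := hpos B₁ hB₁
  have hx₂ : 0 < x₂ := hpos B₂ hB₂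
  have h₁ := hroot B₁ hB₁
  have h₂ := hroot B₂ hB₂
  -- Factored form of the cubic:
  have e₁ : (K₁*x₁+1+K₂)*(x₁+Kd)*(x₁-Atot) + gtot*K₁*x₁*(x₁+Kd)
      + B₁*x₁*(K₁*x₁+1+K₂) = 0 := by linear_combination h₁
  have e₂ : (K₁*x₂+1+K₂)*(x₂+Kd)*(x₂-Atot) + gtot*K₁*x₂*(x₂+Kd)
      + B₂*x₂*(K₁*x₂+1+K₂) = 0 := by linear_combination h₂
  have hD₁ : 0 < K₁*x₁+1+K₂ := by nlinarith
  have hD₂ : 0 < K₁*x₂+1+K₂ := by nlinarith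
  have hE₁ : 0 < x₁+Kd := by linarith
  have hE₂ : 0 < x₂+Kd := by linarith
  -- Conservation form: Atot = x + gtot K₁ x / D(x) + B x / E(x)
  have c₁ : Atot = x₁ + gtot*K₁*x₁/(K₁*x₁+1+K₂) + B₁*x₁/(x₁+Kd) := by
    field_simp
    linear_combination -e₁
  have c₂ : Atot = x₂ + gtot*K₁*x₂/(K₁*x₂+1+K₂) + B₂*x₂/(x₂+Kd) := by
    field_simp
    linear_combination -e₂
  -- Each term is monotone, with the last strictly increasing.
  have t1 : x₁ ≤ x₂ := hcon
  have t2 : gtot*K₁*x₁/(K₁*x₁+1+K₂) ≤ gtot*K₁*x₂/(K₁*x₂+1+K₂) := by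
    rw [div_le_div_iff₀ hD₁ hD₂]
    nlinarith [mul_le_mul_of_nonneg_left t1 (le_of_lt (mul_pos hgtot hK₁))]
  have t3 : B₁*x₁/(x₁+Kd) < B₂*x₂/(x₂+Kd) := by
    rw [div_lt_div_iff₀ hE₁ hE₂]
    have a1 : B₁*(x₁*x₂) < B₂*(x₁*x₂) :=
      mul_lt_mul_of_pos_right hlt (mul_pos hx₁ hx₂)
    have a2 : B₁*x₁*Kd ≤ B₂*x₂*Kd :=
      mul_le_mul_of_nonneg_right
        (mul_le_mul hlt.le t1 hx₁.le (le_trans hB₁ hlt.le)) hKd.le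
    calc B₁*x₁*(x₂+Kd) = B₁*(x₁*x₂) + B₁*x₁*Kd := by ring
      _ < B₂*(x₁*x₂) + B₂*x₂*Kd := by linarith
      _ = B₂*x₂*(x₁+Kd) := by ring
  linarith [c₁, c₂]
end

section
/- Let K₁ > 0, K₂ ≥ 0, K_d > 0, A_tot > 0, g_tot > 0, and let ρ ≥ 0 satisfy ρ·K₂ < 1 + K₂. For B ≥ 0 let A_qss(B) be the unique positive root of the cubic Φ_B with coefficients a = K₁, b = 1 + K₂ + (g_tot + B − A_tot + K_d)·K₁, c = (1 + K₂)·(B − A_tot + K_d) + (g_tot − A_tot)·K_d·K₁, d = −(1 + K₂)·A_tot·K_d, and define the transcription function T(B) = (A_qss(B)·K₁ / (1 + K₂ + A_qss(B)·K₁))·(1 − ρ·K₂/(1 + K₂)) + ρ·K₂/(1 + K₂). Then T is strictly decreasing on [0,∞). -/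
/-- The transcription function `T` of the reduced IT-MFL model is strictly
decreasing on `[0, ∞)`. -/
theorem transcription_strictAntiOn (K₁ K₂ Kd Atot gtot ρ : ℝ)
    (hK₁ : 0 < K₁) (hK₂ : 0 ≤ K₂) (hKd : 0 < Kd)
    (hAtot : 0 < Atot) (hgtot : 0 < gtot)
    (hρ : 0 ≤ ρ) (hρK₂ : ρ * K₂ < 1 + K₂)
    (Aqss : ℝ → ℝ)
    (hpos : ∀ B : ℝ, 0 ≤ B → 0 < Aqss B)
    (hroot : ∀ B : ℝ, 0 ≤ B →
      K₁ * (Aqss B) ^ 3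
        + (1 + K₂ + (gtot + B - Atot + Kd) * K₁) * (Aqss B) ^ 2
        + ((1 + K₂) * (B - Atot + Kd) + (gtot - Atot) * Kd * K₁) * (Aqss B)
        + (-((1 + K₂) * Atot * Kd)) = 0) :
    StrictAntiOn
      (fun B : ℝ =>
        (Aqss B * K₁ / (1 + K₂ + Aqss B * K₁)) * (1 - ρ * K₂ / (1 + K₂))
          + ρ * K₂ / (1 + K₂))
      (Set.Ici 0) := by
  -- conservation-law identity derived from the cubic root equation
  have hcons : ∀ B : ℝ, 0 ≤ B →
      Aqss B + Aqss B * B / (Kd + Aqss B)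
        + gtot * (Aqss B) * K₁ / (1 + K₂ + Aqss B * K₁) = Atot := by
    intro B hB
    have hA := hpos B hB
    have hd1 : (0:ℝ) < Kd + Aqss B := by linarith
    have hd2 : (0:ℝ) < 1 + K₂ + Aqss B * K₁ := by nlinarith
    have hr := hroot B hB
    field_simp
    nlinarith [hr, hA, mul_pos hA hA]
  intro B₁ hB₁ B₂ hB₂ hlt
  have hA₁ := hpos B₁ hB₁
  have hA₂ := hpos B₂ hB₂
  have hd1 : (0:ℝ) < 1 + K₂ + Aqss B₁ * K₁ := by nlinarith
  have hd2 : (0:ℝ) < 1 + K₂ + Aqss B₂ * K₁ := by nlinarith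
  -- Aqss is strictly decreasing
  have hAlt : Aqss B₂ < Aqss B₁ := by
    by_contra h
    push_neg at h
    have h₁ := hcons B₁ hB₁
    have h₂ := hcons B₂ (le_of_lt (lt_of_le_of_lt hB₁ hlt))
    have hk1 : (0:ℝ) < Kd + Aqss B₁ := by linarith
    have hk2 : (0:ℝ) < Kd + Aqss B₂ := by linarith
    have t2 : Aqss B₁ * B₁ / (Kd + Aqss B₁) < Aqss B₂ * B₂ / (Kd + Aqss B₂) := by
      rw [div_lt_div_iff₀ hk1 hk2]
      nlinarith [mul_pos hA₂ hk1, mul_nonneg (le_of_lt hA₂) hB₁,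
        mul_nonneg hB₁ (sub_nonneg.mpr h)]
    have t3 : gtot * Aqss B₁ * K₁ / (1 + K₂ + Aqss B₁ * K₁)
        ≤ gtot * Aqss B₂ * K₁ / (1 + K₂ + Aqss B₂ * K₁) := by
      rw [div_le_div_iff₀ hd1 hd2]
      nlinarith [mul_nonneg (mul_nonneg (le_of_lt hgtot) (le_of_lt hK₁))
        (sub_nonneg.mpr h)]
    linarith
  -- transfer to T
  have hfac : 0 < 1 - ρ * K₂ / (1 + K₂) := by
    rw [sub_pos, div_lt_one (by linarith : (0:ℝ) < 1 + K₂)]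
    exact hρK₂
  have hfrac : Aqss B₂ * K₁ / (1 + K₂ + Aqss B₂ * K₁)
      < Aqss B₁ * K₁ / (1 + K₂ + Aqss B₁ * K₁) := by
    rw [div_lt_div_iff₀ hd2 hd1]
    nlinarith [mul_pos hK₁ (show (0:ℝ) < 1 + K₂ by linarith), hAlt]
  simp only
  have := mul_lt_mul_of_pos_right hfrac hfac
  linarith
end

section
/- Let K₁ > 0, K₂ ≥ 0, K_d > 0, A_tot > 0, g_tot > 0, and let ρ ≥ 0 satisfy ρ·K₂ < 1 + K₂. With A_qss(B) the unique positive root of the cubic Φ_B (coefficients a = K₁, b = 1 + K₂ + (g_tot + B − A_tot + K_d)·K₁, c = (1 + K₂)·(B − A_tot + K_d) + (g_tot − A_tot)·K_d·K₁, d = −(1 + K₂)·A_tot·K_d) and T(B) = (A_qss(B)·K₁/(1 + K₂ + A_qss(B)·K₁))·(1 − ρ·K₂/(1 + K₂)) + ρ·K₂/(1 + K₂), there exists a unique B* ≥ 0 with T(B*) = B*. -/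
noncomputable def hf (K₁ K₂ Kd gtot : ℝ) (A B : ℝ) : ℝ :=
  A + A * B / (A + Kd) + gtot * K₁ * A / (K₁ * A + 1 + K₂)

noncomputable def tau (K₁ K₂ ρ : ℝ) (A : ℝ) : ℝ :=
  A * K₁ / (1 + K₂ + A * K₁) * (1 - ρ * K₂ / (1 + K₂)) + ρ * K₂ / (1 + K₂)

lemma hf_eq (K₁ K₂ Kd Atot gtot : ℝ) (hK₁ : 0 < K₁) (hK₂ : 0 ≤ K₂) (hKd : 0 < Kd)
    {A B : ℝ} (hA : 0 < A)
    (h : K₁ * A ^ 3 + (1 + K₂ + (gtot + B - Atot + Kd) * K₁) * A ^ 2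
        + ((1 + K₂) * (B - Atot + Kd) + (gtot - Atot) * Kd * K₁) * A
        + (-((1 + K₂) * Atot * Kd)) = 0) :
    hf K₁ K₂ Kd gtot A B = Atot := by
  have h1 : A + Kd ≠ 0 := by positivity
  have h2 : K₁ * A + 1 + K₂ ≠ 0 := by
    have : 0 < K₁ * A + 1 + K₂ := by nlinarith [mul_pos hK₁ hA]
    exact ne_of_gt this
  unfold hf
  field_simp
  linear_combination h

lemma hf_monoA (K₁ K₂ Kd gtot : ℝ) (hK₁ : 0 < K₁) (hK₂ : 0 ≤ K₂) (hKd : 0 < Kd)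
    (hgtot : 0 ≤ gtot) {B x y : ℝ} (hB : 0 ≤ B) (hx : 0 < x) (hxy : x < y) :
    hf K₁ K₂ Kd gtot x B < hf K₁ K₂ Kd gtot y B := by
  have hy : 0 < y := hx.trans hxy
  have hx1 : 0 < x + Kd := by linarith
  have hy1 : 0 < y + Kd := by linarith
  have hx2 : 0 < K₁ * x + 1 + K₂ := by nlinarith [mul_pos hK₁ hx]
  have hy2 : 0 < K₁ * y + 1 + K₂ := by nlinarith [mul_pos hK₁ hy]
  have h1 : x * B / (x + Kd) ≤ y * B / (y + Kd) := by
    rw [div_le_div_iff₀ hx1 hy1]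
    nlinarith [mul_nonneg (mul_nonneg hB hKd.le) (by linarith : (0:ℝ) ≤ y - x)]
  have h2 : gtot * K₁ * x / (K₁ * x + 1 + K₂) ≤ gtot * K₁ * y / (K₁ * y + 1 + K₂) := by
    rw [div_le_div_iff₀ hx2 hy2]
    nlinarith [mul_nonneg (mul_nonneg (mul_nonneg hgtot hK₁.le) (by linarith : (0:ℝ) ≤ 1 + K₂))
      (by linarith : (0:ℝ) ≤ y - x)]
  unfold hf; linarith

lemma hf_monoB (K₁ K₂ Kd gtot : ℝ) (hKd : 0 < Kd) {A b c : ℝ} (hA : 0 < A) (hbc : b < c) :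
    hf K₁ K₂ Kd gtot A b < hf K₁ K₂ Kd gtot A c := by
  have hA1 : 0 < A + Kd := by linarith
  have h2 : A * b / (A + Kd) < A * c / (A + Kd) := by
    rw [div_lt_div_iff₀ hA1 hA1]
    nlinarith [mul_pos (mul_pos hA hA1) (sub_pos.2 hbc)]
  unfold hf; linarith

lemma tau_mono (K₁ K₂ ρ : ℝ) (hK₁ : 0 < K₁) (hK₂ : 0 ≤ K₂) (hρ : 0 ≤ ρ)
    (hρK₂ : ρ * K₂ < 1 + K₂) {x y : ℝ} (hx : 0 ≤ x) (hxy : x < y) :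
    tau K₁ K₂ ρ x < tau K₁ K₂ ρ y := by
  have h1 : (0:ℝ) < 1 + K₂ := by linarith
  have hp0 : 0 ≤ ρ * K₂ / (1 + K₂) := div_nonneg (mul_nonneg hρ hK₂) h1.le
  have hp1 : ρ * K₂ / (1 + K₂) < 1 := (div_lt_one h1).2 hρK₂
  have hdx : 0 < 1 + K₂ + x * K₁ := by nlinarith [mul_nonneg hx hK₁.le]
  have hdy : 0 < 1 + K₂ + y * K₁ := by nlinarith [mul_pos (hx.trans_lt hxy) hK₁]
  have hfr : x * K₁ / (1 + K₂ + x * K₁) < y * K₁ / (1 + K₂ + y * K₁) := by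
    rw [div_lt_div_iff₀ hdx hdy]
    nlinarith [mul_pos (mul_pos hK₁ h1) (sub_pos.2 hxy)]
  unfold tau
  nlinarith [hfr, hp1]

lemma tau_lt_one (K₁ K₂ ρ : ℝ) (hK₁ : 0 < K₁) (hK₂ : 0 ≤ K₂) (hρ : 0 ≤ ρ)
    (hρK₂ : ρ * K₂ < 1 + K₂) {A : ℝ} (hA : 0 ≤ A) : tau K₁ K₂ ρ A < 1 := by
  have h1 : (0:ℝ) < 1 + K₂ := by linarith
  have hp1 : ρ * K₂ / (1 + K₂) < 1 := (div_lt_one h1).2 hρK₂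
  have hd : 0 < 1 + K₂ + A * K₁ := by nlinarith [mul_nonneg hA hK₁.le]
  have hfr : A * K₁ / (1 + K₂ + A * K₁) < 1 := (div_lt_one hd).2 (by nlinarith)
  have hfr0 : 0 ≤ A * K₁ / (1 + K₂ + A * K₁) := div_nonneg (mul_nonneg hA hK₁.le) hd.le
  unfold tau; nlinarith

lemma tau_pos (K₁ K₂ ρ : ℝ) (hK₁ : 0 < K₁) (hK₂ : 0 ≤ K₂) (hρ : 0 ≤ ρ)
    (hρK₂ : ρ * K₂ < 1 + K₂) {A : ℝ} (hA : 0 < A) : 0 < tau K₁ K₂ ρ A := by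
  have h1 : (0:ℝ) < 1 + K₂ := by linarith
  have hp0 : 0 ≤ ρ * K₂ / (1 + K₂) := div_nonneg (mul_nonneg hρ hK₂) h1.le
  have hp1 : ρ * K₂ / (1 + K₂) < 1 := (div_lt_one h1).2 hρK₂
  have hd : 0 < 1 + K₂ + A * K₁ := by nlinarith [mul_pos hA hK₁]
  have hfr : 0 < A * K₁ / (1 + K₂ + A * K₁) := div_pos (mul_pos hA hK₁) hd
  unfold tau; nlinarith

/-- The transcription function `T` of the reduced IT-MFL model has a unique
non-negative fixed point, which determines the unique non-negative
equilibrium of the reduced model. -/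
theorem transcription_unique_fixed_point (K₁ K₂ Kd Atot gtot ρ : ℝ)
    (hK₁ : 0 < K₁) (hK₂ : 0 ≤ K₂) (hKd : 0 < Kd)
    (hAtot : 0 < Atot) (hgtot : 0 < gtot)
    (hρ : 0 ≤ ρ) (hρK₂ : ρ * K₂ < 1 + K₂)
    (Aqss : ℝ → ℝ)
    (hpos : ∀ B : ℝ, 0 ≤ B → 0 < Aqss B)
    (hroot : ∀ B : ℝ, 0 ≤ B →
      K₁ * (Aqss B) ^ 3
        + (1 + K₂ + (gtot + B - Atot + Kd) * K₁) * (Aqss B) ^ 2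
        + ((1 + K₂) * (B - Atot + Kd) + (gtot - Atot) * Kd * K₁) * (Aqss B)
        + (-((1 + K₂) * Atot * Kd)) = 0) :
    ∃! B : ℝ, 0 ≤ B ∧
      (Aqss B * K₁ / (1 + K₂ + Aqss B * K₁)) * (1 - ρ * K₂ / (1 + K₂))
          + ρ * K₂ / (1 + K₂) = B := by
  show ∃! B : ℝ, 0 ≤ B ∧ tau K₁ K₂ ρ (Aqss B) = B
  have hkey : ∀ B : ℝ, 0 ≤ B → hf K₁ K₂ Kd gtot (Aqss B) B = Atot :=
    fun B hB => hf_eq K₁ K₂ Kd Atot gtot hK₁ hK₂ hKd (hpos B hB) (hroot B hB)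
  -- no two distinct fixed points
  have key : ∀ b c : ℝ, (0 ≤ b ∧ tau K₁ K₂ ρ (Aqss b) = b) →
      (0 ≤ c ∧ tau K₁ K₂ ρ (Aqss c) = c) → b < c → False := by
    rintro b c ⟨hb0, hbfix⟩ ⟨hc0, hcfix⟩ hbc
    have hAb := hpos b hb0
    have hAc := hpos c hc0
    have h1 : hf K₁ K₂ Kd gtot (Aqss b) b = Atot := hkey b hb0
    have h2 : hf K₁ K₂ Kd gtot (Aqss c) c = Atot := hkey c hc0
    have h3 : hf K₁ K₂ Kd gtot (Aqss c) b < Atot := by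
      have := hf_monoB K₁ K₂ Kd gtot hKd hAc hbc
      linarith
    have h4 : Aqss c < Aqss b := by
      by_contra h
      push_neg at h
      rcases eq_or_lt_of_le h with h | h
      · rw [h] at h1; linarith
      · have := hf_monoA K₁ K₂ Kd gtot hK₁ hK₂ hKd hgtot.le hb0 hAb h
        linarith
    have := tau_mono K₁ K₂ ρ hK₁ hK₂ hρ hρK₂ hAc.le h4
    rw [hbfix, hcfix] at this
    linarith
  -- existence via IVT
  have hA₀ : 0 < Aqss 0 := hpos 0 le_rfl
  have h0 : hf K₁ K₂ Kd gtot (Aqss 0) 0 = Atot := hkey 0 le_rfl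
  set A₀ := Aqss 0 with hA₀def
  have hg1 : (0:ℝ) < 1 + gtot * K₁ := by nlinarith
  set A₁ := min A₀ (min (Atot / (2 * (1 + gtot * K₁))) (Atot * Kd / 2)) with hA₁def
  have hA₁ : 0 < A₁ := lt_min hA₀ (lt_min (by positivity) (by positivity))
  have hA₁A₀ : A₁ ≤ A₀ := min_le_left _ _
  have hA₁a : A₁ ≤ Atot / (2 * (1 + gtot * K₁)) := le_trans (min_le_right _ _) (min_le_left _ _)
  have hA₁b : A₁ ≤ Atot * Kd / 2 := le_trans (min_le_right _ _) (min_le_right _ _)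
  set F : ℝ → ℝ := fun A =>
    tau K₁ K₂ ρ A - (Atot - hf K₁ K₂ Kd gtot A 0) * (A + Kd) / A with hFdef
  have hxpos : ∀ x ∈ Set.Icc A₁ A₀, 0 < x := fun x hx => lt_of_lt_of_le hA₁ hx.1
  have hFcont : ContinuousOn F (Set.Icc A₁ A₀) := by
    rw [hFdef]
    unfold tau hf
    apply ContinuousOn.sub
    · apply ContinuousOn.add
      · apply ContinuousOn.mul ?_ continuousOn_const
        apply ContinuousOn.div (by fun_prop) (by fun_prop)
        intro x hx
        have := hxpos x hx
        have : 0 < 1 + K₂ + x * K₁ := by nlinarith [mul_pos this hK₁]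
        exact ne_of_gt this
      · exact continuousOn_const
    · apply ContinuousOn.div ?_ (by fun_prop) (fun x hx => ne_of_gt (hxpos x hx))
      apply ContinuousOn.mul ?_ (by fun_prop)
      apply ContinuousOn.sub continuousOn_const
      apply ContinuousOn.add
      · apply ContinuousOn.add (by fun_prop)
        apply ContinuousOn.div (by fun_prop) (by fun_prop)
        intro x hx
        exact ne_of_gt (by linarith [hxpos x hx])
      · apply ContinuousOn.div (by fun_prop) (by fun_prop)
        intro x hx
        have := hxpos x hx
        exact ne_of_gt (by nlinarith [mul_pos hK₁ this])
  have hhfA₁ : hf K₁ K₂ Kd gtot A₁ 0 = A₁ + gtot * K₁ * A₁ / (K₁ * A₁ + 1 + K₂) := by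
    unfold hf
    rw [mul_zero, zero_div, add_zero]
  have hFA₁ : F A₁ ≤ 0 := by
    have htau1 : tau K₁ K₂ ρ A₁ < 1 := tau_lt_one K₁ K₂ ρ hK₁ hK₂ hρ hρK₂ hA₁.le
    have hgb : gtot * K₁ * A₁ / (K₁ * A₁ + 1 + K₂) ≤ gtot * K₁ * A₁ := by
      apply div_le_self (by positivity)
      nlinarith [mul_pos hK₁ hA₁]
    have hA₁a' : A₁ * (2 * (1 + gtot * K₁)) ≤ Atot := by
      rw [← le_div_iff₀ (by positivity)]; exact hA₁a
    have h5 : Atot / 2 ≤ Atot - hf K₁ K₂ Kd gtot A₁ 0 := by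
      rw [hhfA₁]; nlinarith
    have h6 : 1 < (Atot - hf K₁ K₂ Kd gtot A₁ 0) * (A₁ + Kd) / A₁ := by
      rw [one_lt_div hA₁]
      nlinarith [mul_le_mul_of_nonneg_right h5 (show (0:ℝ) ≤ A₁ + Kd by linarith),
        mul_pos hAtot hA₁]
    rw [hFdef]
    simp only
    linarith
  have hFA₀ : 0 ≤ F A₀ := by
    rw [hFdef]
    simp only [h0, sub_self, zero_mul, zero_div, sub_zero]
    exact (tau_pos K₁ K₂ ρ hK₁ hK₂ hρ hρK₂ hA₀).le
  obtain ⟨Astar, hAmem, hFz⟩ :=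
    intermediate_value_Icc hA₁A₀ hFcont (⟨hFA₁, hFA₀⟩ : (0:ℝ) ∈ Set.Icc (F A₁) (F A₀))
  have hAs : 0 < Astar := lt_of_lt_of_le hA₁ hAmem.1
  set Bs := tau K₁ K₂ ρ Astar with hBsdef
  have hBs0 : 0 ≤ Bs := (tau_pos K₁ K₂ ρ hK₁ hK₂ hρ hρK₂ hAs).le
  have hBseq : Bs = (Atot - hf K₁ K₂ Kd gtot Astar 0) * (Astar + Kd) / Astar := by
    rw [hFdef] at hFz
    simp only at hFz
    linarith
  have hfeq : hf K₁ K₂ Kd gtot Astar Bs = Atot := by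
    have hne0 : Astar ≠ 0 := ne_of_gt hAs
    have hne1 : Astar + Kd ≠ 0 := by positivity
    have hne2 : K₁ * Astar + 1 + K₂ ≠ 0 := ne_of_gt (by nlinarith [mul_pos hK₁ hAs])
    have hBseq' : Bs * Astar = (Atot - hf K₁ K₂ Kd gtot Astar 0) * (Astar + Kd) := by
      rw [hBseq]; field_simp
    unfold hf at hBseq' ⊢
    field_simp at hBseq' ⊢
    linear_combination hBseq'
  have hA2 := hpos Bs hBs0
  have h7 : hf K₁ K₂ Kd gtot (Aqss Bs) Bs = Atot := hkey Bs hBs0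
  have h8 : Aqss Bs = Astar := by
    rcases lt_trichotomy (Aqss Bs) Astar with h | h | h
    · have := hf_monoA K₁ K₂ Kd gtot hK₁ hK₂ hKd hgtot.le hBs0 hA2 h
      rw [h7, hfeq] at this; exact absurd this (lt_irrefl _)
    · exact h
    · have := hf_monoA K₁ K₂ Kd gtot hK₁ hK₂ hKd hgtot.le hBs0 hAs h
      rw [h7, hfeq] at this; exact absurd this (lt_irrefl _)
  refine ⟨Bs, ⟨hBs0, by rw [h8]⟩, ?_⟩
  intro b hb
  rcases lt_trichotomy b Bs with h | h | h
  · exact absurd (key b Bs hb ⟨hBs0, by rw [h8]⟩ h) not_false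
  · exact h
  · exact absurd (key Bs b ⟨hBs0, by rw [h8]⟩ hb h) not_false
end
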